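/- Let N ≥ 1 and let z : {1,…,N}×{1,…,N} → ℂ. For each permutation σ of {1,…,N} define the real N×N matrix B(σ) by B(σ)_{hj} := Re( z(h, σ(h)) · conj( z(j, σ(h)) ) ), and for each u : {1,…,N} → {0,1} define the real N×N matrix D(u) by D(u)_{hj} := Re z(h,j) if u(j) = 0 and D(u)_{hj} := Im z(h,j) if u(j) = 1. Then Σ_{σ ∈ S_N} det B(σ) = Σ_{u ∈ {0,1}^N} ( det D(u) )². -/

import Mathlib

open Matrix

/-- the combinatorial identity behind nonnegativity of `K_{α,β}`. For any
`z : {1,…,N}² → ℂ`, with `B(σ)_{hj} := Re(z(h,σ(h))·conj(z(j,σ(h))))` and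
`D(u)_{hj} := Re z(h,j)` if `u(j)=0`, `Im z(h,j)` if `u(j)=1`, one has
`Σ_{σ ∈ S_N} det B(σ) = Σ_{u ∈ {0,1}^N} (det D(u))²`. -/
theorem sum_det_B_eq_sum_sq_det_D
    (N : ℕ) (hN : 1 ≤ N) (z : Fin N → Fin N → ℂ) :
    ∑ σ : Equiv.Perm (Fin N),
        (Matrix.of fun h j : Fin N =>
          (z h (σ h) * (starRingEnd ℂ) (z j (σ h))).re).det
      = ∑ u : Fin N → Bool,
        ((Matrix.of fun h j : Fin N =>
          if u j then (z h j).im else (z h j).re).det) ^ 2 := by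
  classical
  set w : Bool → Fin N → Fin N → ℝ :=
    fun b h k => if b then (z h k).im else (z h k).re with hw
  -- entry expansion
  have hentry : ∀ h j k : Fin N, (z h k * (starRingEnd ℂ) (z j k)).re
      = ∑ b : Bool, w b h k * w b j k := by
    intro h j k
    simp [hw, Fintype.sum_bool, Complex.mul_re]
    ring
  -- sign cast fact
  have hsgn : ∀ s t : ℤˣ, ((s : ℤ) : ℝ) * (((t * s : ℤˣ) : ℤ) : ℝ) = ((t : ℤ) : ℝ) := by
    intro s t
    rcases Int.units_eq_one_or s with h | h <;> rcases Int.units_eq_one_or t with h' | h' <;>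
      simp [h, h']
  -- RHS as a double sum over pairs of permutations
  have hRHS : (∑ u : Fin N → Bool,
        ((Matrix.of fun h j : Fin N =>
          if u j then (z h j).im else (z h j).re).det) ^ 2)
      = ∑ q : Equiv.Perm (Fin N) × Equiv.Perm (Fin N),
          (((Equiv.Perm.sign q.1 : ℤ) : ℝ) * ((Equiv.Perm.sign q.2 : ℤ) : ℝ)) *
            ∏ k, (z (q.1 k) k * (starRingEnd ℂ) (z (q.2 k) k)).re := by
    rw [Fintype.sum_prod_type]
    have hdet : ∀ u : Fin N → Bool,
        ((Matrix.of fun h j : Fin N =>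
          if u j then (z h j).im else (z h j).re).det) ^ 2
        = ∑ α : Equiv.Perm (Fin N), ∑ β : Equiv.Perm (Fin N),
            (((Equiv.Perm.sign α : ℤ) : ℝ) * ((Equiv.Perm.sign β : ℤ) : ℝ)) *
              ∏ j, (w (u j) (α j) j * w (u j) (β j) j) := by
      intro u
      rw [sq, Matrix.det_apply', Finset.sum_mul_sum]
      refine Finset.sum_congr rfl fun α _ => Finset.sum_congr rfl fun β _ => ?_
      simp only [Matrix.of_apply, hw]
      rw [mul_mul_mul_comm, ← Finset.prod_mul_distrib]
    calc
      (∑ u : Fin N → Bool,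
          ((Matrix.of fun h j : Fin N =>
            if u j then (z h j).im else (z h j).re).det) ^ 2)
          = ∑ u : Fin N → Bool, ∑ α : Equiv.Perm (Fin N), ∑ β : Equiv.Perm (Fin N),
              (((Equiv.Perm.sign α : ℤ) : ℝ) * ((Equiv.Perm.sign β : ℤ) : ℝ)) *
                ∏ j, (w (u j) (α j) j * w (u j) (β j) j) :=
        Finset.sum_congr rfl fun u _ => hdet u
      _ = ∑ α : Equiv.Perm (Fin N), ∑ β : Equiv.Perm (Fin N),
              (((Equiv.Perm.sign α : ℤ) : ℝ) * ((Equiv.Perm.sign β : ℤ) : ℝ)) *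
                ∑ u : Fin N → Bool, ∏ j, (w (u j) (α j) j * w (u j) (β j) j) := by
        rw [Finset.sum_comm]
        refine Finset.sum_congr rfl fun α _ => ?_
        rw [Finset.sum_comm]
        refine Finset.sum_congr rfl fun β _ => ?_
        rw [Finset.mul_sum]
      _ = ∑ α : Equiv.Perm (Fin N), ∑ β : Equiv.Perm (Fin N),
              (((Equiv.Perm.sign α : ℤ) : ℝ) * ((Equiv.Perm.sign β : ℤ) : ℝ)) *
                ∏ k, (z (α k) k * (starRingEnd ℂ) (z (β k) k)).re := by
        refine Finset.sum_congr rfl fun α _ => Finset.sum_congr rfl fun β _ => ?_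
        congr 1
        rw [← Fintype.prod_sum (fun j b => w b (α j) j * w b (β j) j)]
        exact Finset.prod_congr rfl fun k _ => (hentry (α k) (β k) k).symm
  rw [hRHS]
  -- LHS as a double sum over pairs of permutations
  have hLHS : ∀ σ : Equiv.Perm (Fin N),
      (Matrix.of fun h j : Fin N =>
        (z h (σ h) * (starRingEnd ℂ) (z j (σ h))).re).det
      = ∑ τ : Equiv.Perm (Fin N), ((Equiv.Perm.sign τ : ℤ) : ℝ) *
          ∏ k, (z (σ⁻¹ k) k * (starRingEnd ℂ) (z ((σ * τ)⁻¹ k) k)).re := by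
    intro σ
    rw [Matrix.det_apply']
    refine Finset.sum_congr rfl fun τ _ => ?_
    simp only [Matrix.of_apply]
    congr 1
    rw [← Equiv.prod_comp ((σ * τ)⁻¹ : Equiv.Perm (Fin N))
      (fun j => (z (τ j) (σ (τ j)) * (starRingEnd ℂ) (z j (σ (τ j)))).re)]
    refine Finset.prod_congr rfl fun k _ => ?_
    have h1 : σ (τ ((σ * τ)⁻¹ k)) = k := by
      rw [← Equiv.Perm.mul_apply, ← Equiv.Perm.mul_apply, mul_inv_cancel, Equiv.Perm.one_apply]
    have h2 : τ ((σ * τ)⁻¹ k) = σ⁻¹ k := by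
      rw [_root_.mul_inv_rev, Equiv.Perm.mul_apply, ← Equiv.Perm.mul_apply τ, mul_inv_cancel, Equiv.Perm.one_apply]
    rw [h1, h2]
  simp only [hLHS]
  refine Eq.trans ?_ (Fintype.sum_equiv
    (⟨fun p => (p.1⁻¹, p.2⁻¹ * p.1⁻¹), fun q => (q.1⁻¹, q.1 * q.2⁻¹),
      fun p => by simp [_root_.mul_inv_rev, mul_assoc],
      fun q => by simp [_root_.mul_inv_rev, mul_assoc]⟩ :
        (Equiv.Perm (Fin N) × Equiv.Perm (Fin N)) ≃ (Equiv.Perm (Fin N) × Equiv.Perm (Fin N)))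
    (fun p => ((Equiv.Perm.sign p.2 : ℤ) : ℝ) *
        ∏ k, (z (p.1⁻¹ k) k * (starRingEnd ℂ) (z ((p.1 * p.2)⁻¹ k) k)).re)
    (fun q => (((Equiv.Perm.sign q.1 : ℤ) : ℝ) * ((Equiv.Perm.sign q.2 : ℤ) : ℝ)) *
        ∏ k, (z (q.1 k) k * (starRingEnd ℂ) (z (q.2 k) k)).re)
    (fun p => ?_))
  · exact (Fintype.sum_prod_type (fun p : Equiv.Perm (Fin N) × Equiv.Perm (Fin N) =>
      ((Equiv.Perm.sign p.2 : ℤ) : ℝ) *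
        ∏ k, (z (p.1⁻¹ k) k * (starRingEnd ℂ) (z ((p.1 * p.2)⁻¹ k) k)).re)).symm
  · obtain ⟨σ, τ⟩ := p
    simp only [Equiv.coe_fn_mk]
    rw [_root_.mul_inv_rev]
    congr 1
    rw [Equiv.Perm.sign_mul, Equiv.Perm.sign_inv, Equiv.Perm.sign_inv]
    exact (hsgn (Equiv.Perm.sign σ) (Equiv.Perm.sign τ)).symm
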